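/- Let A1, A2, A3, A4 be four points in the Euclidean plane in convex position, and let A0 be an interior point of the quadrilateral. Suppose there exist positive weights B1 = B3 and B2 = B4 such that B1*u(A0,A1) + B2*u(A0,A2) + B3*u(A0,A3) + B4*u(A0,A4) = 0, where u(A0,Ai) denotes the unit vector from A0 to Ai. Then the angle A1-A0-A2 equals the angle A3-A0-A4, and the angle A2-A0-A3 equals the angle A4-A0-A1. -/

import Mathlib

open EuclideanGeometry
open RealInnerProductSpace

theorem stmt_4 (A1 A2 A3 A4 A0 : EuclideanSpace ℝ (Fin 2)) (B1 B2 B3 B4 : ℝ)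
    (hB1 : 0 < B1) (hB2 : 0 < B2) (hB13 : B1 = B3) (hB24 : B2 = B4)
    (hconv : ∀ P ∈ ({A1, A2, A3, A4} : Set (EuclideanSpace ℝ (Fin 2))),
      P ∉ convexHull ℝ (({A1, A2, A3, A4} : Set (EuclideanSpace ℝ (Fin 2))) \ {P}))
    (hint : A0 ∈ interior (convexHull ℝ ({A1, A2, A3, A4} : Set (EuclideanSpace ℝ (Fin 2)))))
    (h1 : A0 ≠ A1) (h2 : A0 ≠ A2) (h3 : A0 ≠ A3) (h4 : A0 ≠ A4)
    (heq : B1 • (‖A1 - A0‖⁻¹ • (A1 - A0)) + B2 • (‖A2 - A0‖⁻¹ • (A2 - A0))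
         + B3 • (‖A3 - A0‖⁻¹ • (A3 - A0)) + B4 • (‖A4 - A0‖⁻¹ • (A4 - A0)) = 0) :
    ∠ A1 A0 A2 = ∠ A3 A0 A4 ∧ ∠ A2 A0 A3 = ∠ A4 A0 A1 := by
  have hn1 : ‖A1 - A0‖ ≠ 0 := norm_ne_zero_iff.mpr (sub_ne_zero.mpr h1.symm)
  have hn2 : ‖A2 - A0‖ ≠ 0 := norm_ne_zero_iff.mpr (sub_ne_zero.mpr h2.symm)
  have hn3 : ‖A3 - A0‖ ≠ 0 := norm_ne_zero_iff.mpr (sub_ne_zero.mpr h3.symm)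
  have hn4 : ‖A4 - A0‖ ≠ 0 := norm_ne_zero_iff.mpr (sub_ne_zero.mpr h4.symm)
  set u1 : EuclideanSpace ℝ (Fin 2) := ‖A1 - A0‖⁻¹ • (A1 - A0) with hu1def
  set u2 : EuclideanSpace ℝ (Fin 2) := ‖A2 - A0‖⁻¹ • (A2 - A0) with hu2def
  set u3 : EuclideanSpace ℝ (Fin 2) := ‖A3 - A0‖⁻¹ • (A3 - A0) with hu3def
  set u4 : EuclideanSpace ℝ (Fin 2) := ‖A4 - A0‖⁻¹ • (A4 - A0) with hu4def
  have hu1 : ‖u1‖ = 1 := by rw [hu1def, norm_smul, norm_inv, norm_norm]; field_simp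
  have hu2 : ‖u2‖ = 1 := by rw [hu2def, norm_smul, norm_inv, norm_norm]; field_simp
  have hu3 : ‖u3‖ = 1 := by rw [hu3def, norm_smul, norm_inv, norm_norm]; field_simp
  have hu4 : ‖u4‖ = 1 := by rw [hu4def, norm_smul, norm_inv, norm_norm]; field_simp
  have hsum : B1 • u1 + B2 • u2 + B1 • u3 + B2 • u4 = 0 := by
    rw [← hB13, ← hB24] at heq; exact heq
  have hself1 : ⟪u1, u1⟫ = 1 := by rw [real_inner_self_eq_norm_sq, hu1]; norm_num
  have hself2 : ⟪u2, u2⟫ = 1 := by rw [real_inner_self_eq_norm_sq, hu2]; norm_num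
  have hself3 : ⟪u3, u3⟫ = 1 := by rw [real_inner_self_eq_norm_sq, hu3]; norm_num
  have hself4 : ⟪u4, u4⟫ = 1 := by rw [real_inner_self_eq_norm_sq, hu4]; norm_num
  have e1 : ⟪B1 • u1 + B2 • u2 + B1 • u3 + B2 • u4, u1 - u3⟫ = 0 := by
    rw [hsum, inner_zero_left]
  have e2 : ⟪B1 • u1 + B2 • u2 + B1 • u3 + B2 • u4, u2 - u4⟫ = 0 := by
    rw [hsum, inner_zero_left]
  simp only [inner_add_left, inner_sub_right, real_inner_smul_left, hself1, hself2, hself3,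
    hself4] at e1 e2
  rw [real_inner_comm u3 u1] at e1
  rw [real_inner_comm u4 u2] at e2
  have E1 : (inner ℝ u2 u1 : ℝ) + inner ℝ u4 u1 - inner ℝ u2 u3 - inner ℝ u4 u3 = 0 := by
    have h : B2 * ((inner ℝ u2 u1 : ℝ) + inner ℝ u4 u1 - inner ℝ u2 u3 - inner ℝ u4 u3) = 0 := by
      linear_combination e1
    exact (mul_eq_zero.mp h).resolve_left hB2.ne'
  have E2 : (inner ℝ u1 u2 : ℝ) + inner ℝ u3 u2 - inner ℝ u1 u4 - inner ℝ u3 u4 = 0 := by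
    have h : B1 * ((inner ℝ u1 u2 : ℝ) + inner ℝ u3 u2 - inner ℝ u1 u4 - inner ℝ u3 u4) = 0 := by
      linear_combination e2
    exact (mul_eq_zero.mp h).resolve_left hB1.ne'
  have c21 : (inner ℝ u2 u1 : ℝ) = inner ℝ u1 u2 := real_inner_comm _ _
  have c41 : (inner ℝ u4 u1 : ℝ) = inner ℝ u1 u4 := real_inner_comm _ _
  have c23 : (inner ℝ u2 u3 : ℝ) = inner ℝ u3 u2 := real_inner_comm _ _
  have c43 : (inner ℝ u4 u3 : ℝ) = inner ℝ u3 u4 := real_inner_comm _ _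
  have key1 : (inner ℝ u1 u2 : ℝ) = inner ℝ u3 u4 := by linarith
  have key2 : (inner ℝ u2 u3 : ℝ) = inner ℝ u4 u1 := by linarith
  have hang : ∀ (P Q : EuclideanSpace ℝ (Fin 2)) (uP uQ : EuclideanSpace ℝ (Fin 2)),
      uP = ‖P - A0‖⁻¹ • (P - A0) → uQ = ‖Q - A0‖⁻¹ • (Q - A0) →
      ‖P - A0‖ ≠ 0 → ‖Q - A0‖ ≠ 0 →
      ∠ P A0 Q = Real.arccos ⟪uP, uQ⟫ := by
    intro P Q uP uQ hP hQ hnP hnQ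
    have : ∠ P A0 Q = InnerProductGeometry.angle (P - A0) (Q - A0) := by
      rw [EuclideanGeometry.angle, vsub_eq_sub, vsub_eq_sub]
    rw [this, ← InnerProductGeometry.angle_smul_left_of_pos (P - A0) (Q - A0)
      (inv_pos.mpr (hnP.lt_of_le' (norm_nonneg _))),
      ← InnerProductGeometry.angle_smul_right_of_pos _ (Q - A0)
      (inv_pos.mpr (hnQ.lt_of_le' (norm_nonneg _))), ← hP, ← hQ,
      InnerProductGeometry.angle]
    congr 1
    have huP : ‖uP‖ = 1 := by rw [hP, norm_smul, norm_inv, norm_norm]; field_simp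
    have huQ : ‖uQ‖ = 1 := by rw [hQ, norm_smul, norm_inv, norm_norm]; field_simp
    rw [huP, huQ]; ring
  rw [hang A1 A2 u1 u2 hu1def hu2def hn1 hn2, hang A3 A4 u3 u4 hu3def hu4def hn3 hn4,
    hang A2 A3 u2 u3 hu2def hu3def hn2 hn3, hang A4 A1 u4 u1 hu4def hu1def hn4 hn1,
    key1, key2]
  exact ⟨rfl, rfl⟩
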